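/- For every topological space X, the following are equivalent: (1) for every sequence (O_n)_{n∈ℕ} of pairwise disjoint nonempty open subsets of X, there exist an infinite set J ⊆ ℕ and a point x ∈ X such that every neighborhood of x intersects all but finitely many of the sets O_n with n ∈ J; (2) the same condition without requiring the sets O_n to be pairwise disjoint. -/

import Mathlib

def SeqPseudocompact (X : Type*) [TopologicalSpace X] : Prop :=
  ∀ O : ℕ → Set X, (∀ n, IsOpen (O n)) → (∀ n, (O n).Nonempty) →
    ∃ J : Set ℕ, J.Infinite ∧ ∃ x : X,
      ∀ U ∈ nhds x, {n ∈ J | U ∩ O n = ∅}.Finite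

def DSeqPseudocompact (X : Type*) [TopologicalSpace X] : Prop :=
  ∀ O : ℕ → Set X, (∀ n, IsOpen (O n)) → (∀ n, (O n).Nonempty) →
    Pairwise (Function.onFun Disjoint O) →
    ∃ J : Set ℕ, J.Infinite ∧ ∃ x : X,
      ∀ U ∈ nhds x, {n ∈ J | U ∩ O n = ∅}.Finite

namespace SeqPseudoAux

open Set Function

variable {X : Type*} [TopologicalSpace X]

/-- An infinite pairwise-disjoint selection of nonempty open subsets of the `O n`,
with strictly increasing indices. -/
def DisjSel (O : ℕ → Set X) : Prop :=
  ∃ (W : ℕ → Set X) (f : ℕ → ℕ), StrictMono f ∧ (∀ k, IsOpen (W k)) ∧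
    (∀ k, (W k).Nonempty) ∧ (∀ k, W k ⊆ O (f k)) ∧ Pairwise (Function.onFun Disjoint W)

lemma lemA (hD : DSeqPseudocompact X) {O : ℕ → Set X} (hsel : DisjSel O) :
    ∃ J : Set ℕ, J.Infinite ∧ ∃ x : X,
      ∀ U ∈ nhds x, {n ∈ J | U ∩ O n = ∅}.Finite := by
  obtain ⟨W, f, hf, hWo, hWne, hWsub, hWd⟩ := hsel
  obtain ⟨J', hJ', x, hx⟩ := hD W hWo hWne hWd
  refine ⟨f '' J', hJ'.image hf.injective.injOn, x, fun U hU => ?_⟩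
  have hss : {n ∈ f '' J' | U ∩ O n = ∅} ⊆ f '' {k ∈ J' | U ∩ W k = ∅} := by
    rintro n ⟨⟨k, hk, rfl⟩, hn⟩
    refine ⟨k, ⟨hk, ?_⟩, rfl⟩
    rw [← Set.subset_empty_iff, ← hn]
    exact Set.inter_subset_inter_right _ (hWsub k)
  exact (((hx U hU).image f).subset hss)

/-- A valid partial selection relative to `O`, an open set `G`, index set `S`, lower bound `N`. -/
def Valid (O : ℕ → Set X) (G : Set X) (S : Set ℕ) (N : ℕ) (L : List (Set X × ℕ)) : Prop :=
  ∀ p ∈ L, IsOpen p.1 ∧ p.1.Nonempty ∧ p.1 ⊆ O p.2 ∩ G ∧ p.2 ∈ S ∧ N ≤ p.2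

/-- A partial selection can be extended. -/
def Ext (O : ℕ → Set X) (G : Set X) (S : Set ℕ) (N : ℕ) (L : List (Set X × ℕ)) : Prop :=
  ∃ q : Set X × ℕ, q.2 ∈ S ∧ N ≤ q.2 ∧ (∀ p ∈ L, p.2 < q.2) ∧ IsOpen q.1 ∧
    q.1.Nonempty ∧ q.1 ⊆ (O q.2 ∩ G) \ closure (⋃ p ∈ L, p.1)

lemma disjsel_of_ext {O : ℕ → Set X} {G : Set X} {S : Set ℕ} {N : ℕ}
    (hext : ∀ L, Valid O G S N L → Ext O G S N L) : DisjSel O := by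
  classical
  have hnil : Valid O G S N [] := by
    intro p hp
    simp at hp
  let step : {L : List (Set X × ℕ) // Valid O G S N L} →
      {L : List (Set X × ℕ) // Valid O G S N L} := fun L =>
    ⟨L.1 ++ [(hext L.1 L.2).choose], by
      obtain ⟨h1, h2, h3, h4, h5, h6⟩ := (hext L.1 L.2).choose_spec
      intro p hp
      rcases List.mem_append.mp hp with h | h
      · exact L.2 p h
      · rw [List.mem_singleton] at h
        subst h
        exact ⟨h4, h5, h6.trans Set.diff_subset, h1, h2⟩⟩
  let chain : ℕ → {L : List (Set X × ℕ) // Valid O G S N L} :=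
    fun k => step^[k] ⟨[], hnil⟩
  have hchain_succ : ∀ k, (chain (k+1)).1 =
      (chain k).1 ++ [(hext (chain k).1 (chain k).2).choose] := by
    intro k
    show (step^[k+1] ⟨[], hnil⟩).1 = _
    rw [Function.iterate_succ_apply']
  set pair : ℕ → Set X × ℕ := fun k => (hext (chain k).1 (chain k).2).choose with hpair
  have hspec : ∀ k, (pair k).2 ∈ S ∧ N ≤ (pair k).2 ∧ (∀ p ∈ (chain k).1, p.2 < (pair k).2) ∧
      IsOpen (pair k).1 ∧ (pair k).1.Nonempty ∧
      (pair k).1 ⊆ (O (pair k).2 ∩ G) \ closure (⋃ p ∈ (chain k).1, p.1) :=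
    fun k => (hext (chain k).1 (chain k).2).choose_spec
  have hmem_succ : ∀ k, pair k ∈ (chain (k+1)).1 := by
    intro k
    rw [hchain_succ k]
    exact List.mem_append_right _ (List.mem_singleton.mpr rfl)
  have hchain_mono : ∀ j k, j ≤ k → ∀ p ∈ (chain j).1, p ∈ (chain k).1 := by
    intro j k hjk
    induction k with
    | zero =>
      rw [Nat.le_zero] at hjk
      subst hjk
      exact fun p hp => hp
    | succ k ih =>
      rcases Nat.lt_or_ge j (k+1) with h | h
      · intro p hp
        rw [hchain_succ k]
        exact List.mem_append_left _ (ih (Nat.lt_succ_iff.mp h) p hp)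
      · have : j = k + 1 := le_antisymm hjk h
        subst this
        exact fun p hp => hp
  have hmem : ∀ j k, j < k → pair j ∈ (chain k).1 :=
    fun j k h => hchain_mono (j+1) k h (pair j) (hmem_succ j)
  refine ⟨fun k => (pair k).1, fun k => (pair k).2, ?_, ?_, ?_, ?_, ?_⟩
  · apply strictMono_nat_of_lt_succ
    intro k
    exact (hspec (k+1)).2.2.1 (pair k) (hmem_succ k)
  · exact fun k => (hspec k).2.2.2.1
  · exact fun k => (hspec k).2.2.2.2.1
  · exact fun k => ((hspec k).2.2.2.2.2).trans (Set.diff_subset.trans Set.inter_subset_left)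
  · have key : ∀ j k, j < k → Disjoint (pair j).1 (pair k).1 := by
      intro j k hjk
      rw [Set.disjoint_left]
      intro a haj hak
      have h1 : a ∉ closure (⋃ p ∈ (chain k).1, p.1) := ((hspec k).2.2.2.2.2 hak).2
      apply h1
      apply subset_closure
      simp only [Set.mem_iUnion]
      exact ⟨pair j, hmem j k hjk, haj⟩
    intro j k hne
    rcases hne.lt_or_gt with hlt | hlt
    · exact key j k hlt
    · exact (key k j hlt).symm

/-- One refinement step: inside a heavy open set `G`, find a smaller heavy open set
sitting inside some `O m` with a large index `m`. -/
lemma lemB1 {O : ℕ → Set X} (hD : ¬ DisjSel O) (hOpen : ∀ n, IsOpen (O n))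
    {G : Set X} (hG : IsOpen G) {S : Set ℕ} (hS : S.Infinite)
    (hmeet : ∀ n ∈ S, (O n ∩ G).Nonempty) (N : ℕ) :
    ∃ (m : ℕ) (G' : Set X) (S' : Set ℕ), m ∈ S ∧ N ≤ m ∧ IsOpen G' ∧ G'.Nonempty ∧
      G' ⊆ O m ∩ G ∧ S' ⊆ S ∧ S'.Infinite ∧ ∀ n ∈ S', (O n ∩ G').Nonempty := by
  by_cases hstuck : ∃ L, Valid O G S N L ∧ ¬ Ext O G S N L
  · obtain ⟨L, hL, hnext⟩ := hstuck
    set A := ⋃ p ∈ L, p.1 with hA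
    set bound := N + (L.map Prod.snd).sum with hbound
    have hNb : N ≤ bound := Nat.le_add_right _ _
    have hidx : ∀ p ∈ L, p.2 ≤ bound := by
      intro p hp
      have h1 : p.2 ≤ (L.map Prod.snd).sum :=
        List.single_le_sum (fun x _ => Nat.zero_le x) _ (List.mem_map_of_mem hp)
      omega
    have hkey : ∀ n ∈ S, bound < n → O n ∩ G ⊆ closure A := by
      intro n hn hbn
      by_contra hsub
      apply hnext
      refine ⟨((O n ∩ G) \ closure A, n), hn, by omega,
        fun p hp => lt_of_le_of_lt (hidx p hp) hbn,
        ((hOpen n).inter hG).sdiff isClosed_closure, ?_, Set.Subset.rfl⟩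
      rw [Set.nonempty_iff_ne_empty]
      intro he
      exact hsub (Set.diff_eq_empty.mp he)
    set Sb := S \ Set.Iic bound with hSb
    have hSbinf : Sb.Infinite := hS.diff (Set.finite_Iic bound)
    have hcover : ∀ n ∈ Sb, ∃ p ∈ L, (O n ∩ p.1).Nonempty := by
      intro n hn
      obtain ⟨y, hy⟩ := hmeet n hn.1
      have hbn : bound < n := not_le.mp hn.2
      have hy2 : y ∈ closure A := hkey n hn.1 hbn hy
      obtain ⟨z, hz1, hz2⟩ := mem_closure_iff.mp hy2 (O n ∩ G) ((hOpen n).inter hG) hy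
      rw [hA] at hz2
      simp only [Set.mem_iUnion] at hz2
      obtain ⟨p, hp, hzp⟩ := hz2
      exact ⟨p, hp, z, hz1.1, hzp⟩
    have hpig : ∃ p ∈ L, {n | n ∈ Sb ∧ (O n ∩ p.1).Nonempty}.Infinite := by
      by_contra hfin
      push_neg at hfin
      have hsubU : Sb ⊆ ⋃ p ∈ L, {n | n ∈ Sb ∧ (O n ∩ p.1).Nonempty} := by
        intro n hn
        obtain ⟨p, hp, hnp⟩ := hcover n hn
        simp only [Set.mem_iUnion]
        exact ⟨p, hp, hn, hnp⟩
      exact hSbinf (Set.Finite.subset (Set.Finite.biUnion L.finite_toSet hfin) hsubU)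
    obtain ⟨p, hpL, hpinf⟩ := hpig
    obtain ⟨hop, hne, hsubp, hmem, hNle⟩ := hL p hpL
    refine ⟨p.2, p.1, {n | n ∈ Sb ∧ (O n ∩ p.1).Nonempty}, hmem, hNle, hop, hne, hsubp,
      fun n hn => hn.1.1, hpinf, fun n hn => hn.2⟩
  · push_neg at hstuck
    exact absurd (disjsel_of_ext hstuck) hD

/-- Iterating `lemB1`: a nested sequence of nonempty open sets inside the `O (m t)`. -/
lemma lemB {O : ℕ → Set X} (hD : ¬ DisjSel O) (hOpen : ∀ n, IsOpen (O n))
    (hNe : ∀ n, (O n).Nonempty) :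
    ∃ (G : ℕ → Set X) (m : ℕ → ℕ), StrictMono m ∧ (∀ t, IsOpen (G t)) ∧
      (∀ t, (G t).Nonempty) ∧ (∀ t, G (t+1) ⊆ G t) ∧ (∀ t, G (t+1) ⊆ O (m t)) := by
  classical
  obtain ⟨x0, hx0⟩ := hNe 0
  let T := {q : Set X × Set ℕ × ℕ // IsOpen q.1 ∧ q.1.Nonempty ∧ q.2.1.Infinite ∧
    ∀ n ∈ q.2.1, (O n ∩ q.1).Nonempty}
  have key : ∀ q : T, ∃ r : T, r.1.1 ⊆ q.1.1 ∧ q.1.2.2 < r.1.2.2 ∧ r.1.1 ⊆ O r.1.2.2 := by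
    rintro ⟨⟨Gq, Sq, Nq⟩, hGqo, hGqne, hSqinf, hmeet⟩
    obtain ⟨mm, G', S', hmS, hNm, hG'o, hG'ne, hG'sub, hS'S, hS'inf, hmeet'⟩ :=
      lemB1 hD hOpen hGqo hSqinf hmeet (Nq + 1)
    refine ⟨⟨⟨G', S', mm⟩, hG'o, hG'ne, hS'inf, hmeet'⟩, ?_, ?_, ?_⟩
    · exact hG'sub.trans Set.inter_subset_right
    · exact hNm
    · exact hG'sub.trans Set.inter_subset_left
  let step : T → T := fun q => (key q).choose
  have q0 : T := ⟨(Set.univ, Set.univ, 0), isOpen_univ, ⟨x0, trivial⟩, Set.infinite_univ,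
    fun n _ => by rw [Set.inter_univ]; exact hNe n⟩
  let chain : ℕ → T := fun t => step^[t] q0
  have hchain_succ : ∀ t, chain (t+1) = step (chain t) := by
    intro t
    show step^[t+1] q0 = _
    rw [Function.iterate_succ_apply']
  have hstep : ∀ t, (chain (t+1)).1.1 ⊆ (chain t).1.1 ∧
      (chain t).1.2.2 < (chain (t+1)).1.2.2 ∧
      (chain (t+1)).1.1 ⊆ O ((chain (t+1)).1.2.2) := by
    intro t
    rw [hchain_succ t]
    exact (key (chain t)).choose_spec
  refine ⟨fun t => (chain t).1.1, fun t => (chain (t+1)).1.2.2, ?_, ?_, ?_, ?_, ?_⟩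
  · apply strictMono_nat_of_lt_succ
    intro t
    exact (hstep (t+1)).2.1
  · exact fun t => (chain t).2.1
  · exact fun t => (chain t).2.2.1
  · exact fun t => (hstep t).1
  · exact fun t => (hstep t).2.2

lemma lemC {O : ℕ → Set X} (hD : ¬ DisjSel O) {G : ℕ → Set X} {m : ℕ → ℕ}
    (hm : StrictMono m) (hGo : ∀ t, IsOpen (G t)) (hGne : ∀ t, (G t).Nonempty)
    (hnest : ∀ t, G (t+1) ⊆ G t) (hsub : ∀ t, G (t+1) ⊆ O (m t)) :
    ∃ T, ∀ t, G T ⊆ closure (G t) := by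
  by_contra h
  push_neg at h
  have hanti : Antitone G := antitone_nat_of_succ_le hnest
  have h' : ∀ T, ∃ t, T < t ∧ (G T \ closure (G t)).Nonempty := by
    intro T
    obtain ⟨t, ht⟩ := h T
    obtain ⟨y, hy1, hy2⟩ := Set.not_subset.mp ht
    refine ⟨t, ?_, y, hy1, hy2⟩
    by_contra hle
    push_neg at hle
    exact hy2 (subset_closure (hanti hle hy1))
  choose w hw1 hw2 using h'
  set t : ℕ → ℕ := fun k => w^[k+1] 0 with hts
  have htsucc : ∀ k, t (k+1) = w (t k) := by
    intro k
    simp only [hts]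
    exact Function.iterate_succ_apply' w (k+1) 0
  have htmono : StrictMono t := by
    apply strictMono_nat_of_lt_succ
    intro k
    rw [htsucc k]
    exact hw1 (t k)
  have htpos : ∀ k, 1 ≤ t k := by
    intro k
    have h0 : 1 ≤ t 0 := hw1 0
    exact le_trans h0 (htmono.monotone (Nat.zero_le k))
  apply hD
  refine ⟨fun k => G (t k) \ closure (G (t (k+1))), fun k => m (t k - 1), ?_, ?_, ?_, ?_, ?_⟩
  · intro a b hab
    exact hm (Nat.sub_lt_sub_right (htpos a) (htmono hab))
  · intro k
    exact (hGo (t k)).sdiff isClosed_closure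
  · intro k
    simp only
    rw [htsucc k]
    exact hw2 (t k)
  · intro k
    have hk : t k - 1 + 1 = t k := Nat.succ_pred_eq_of_pos (htpos k)
    have := hsub (t k - 1)
    rw [hk] at this
    exact Set.diff_subset.trans this
  · have key : ∀ j k, j < k →
        Disjoint (G (t j) \ closure (G (t (j+1)))) (G (t k) \ closure (G (t (k+1)))) := by
      intro j k hjk
      rw [Set.disjoint_left]
      intro a haj hak
      apply haj.2
      apply subset_closure
      exact hanti (htmono.monotone (Nat.succ_le_of_lt hjk)) hak.1
    intro j k hne
    rcases hne.lt_or_gt with hlt | hlt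
    · exact key j k hlt
    · exact (key k j hlt).symm

end SeqPseudoAux

theorem seq_pseudocompact_iff_disjoint_version (X : Type*) [TopologicalSpace X] :
    DSeqPseudocompact X ↔ SeqPseudocompact X := by
  constructor
  · intro hD O hOpen hNe
    by_cases hsel : SeqPseudoAux.DisjSel O
    · exact SeqPseudoAux.lemA hD hsel
    · obtain ⟨G, m, hm, hGo, hGne, hnest, hsub⟩ := SeqPseudoAux.lemB hsel hOpen hNe
      obtain ⟨T, hT⟩ := SeqPseudoAux.lemC hsel hm hGo hGne hnest hsub
      obtain ⟨x, hx⟩ := hGne T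
      refine ⟨Set.range m, Set.infinite_range_of_injective hm.injective, x, fun U hU => ?_⟩
      have : {n ∈ Set.range m | U ∩ O n = ∅} = ∅ := by
        rw [Set.eq_empty_iff_forall_notMem]
        rintro n ⟨⟨t, rfl⟩, hO⟩
        obtain ⟨U', hU'sub, hU'open, hxU'⟩ := mem_nhds_iff.mp hU
        have h1 : (U' ∩ G T).Nonempty := ⟨x, hxU', hx⟩
        have h2 : U' ∩ G T ⊆ closure (G (t+1)) := fun y hy => hT (t+1) hy.2
        obtain ⟨y, hy⟩ := h1
        obtain ⟨z, hz1, hz2⟩ := mem_closure_iff.mp (h2 hy) (U' ∩ G T)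
          (hU'open.inter (hGo T)) hy
        have : z ∈ U ∩ O (m t) := ⟨hU'sub hz1.1, hsub t hz2⟩
        rw [hO] at this
        exact this
      rw [this]
      exact Set.finite_empty
  · intro hS O h1 h2 _
    exact hS O h1 h2
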